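/- For any constants g > 0 and N₀ > 0, the function G(p, B) = B · log₂(1 + g·p/(N₀·B)) is concave on the open positive quadrant {(p, B) ∈ ℝ² : p > 0 and B > 0}. -/

import Mathlib

open Real Set

lemma concaveOn_logb_two : ConcaveOn ℝ (Set.Ioi (0:ℝ)) (Real.logb 2) := by
  have h2 : (0:ℝ) < Real.log 2 := Real.log_pos one_lt_two
  have h := strictConcaveOn_log_Ioi.concaveOn.smul (le_of_lt (inv_pos.mpr h2))
  have heq : ((Real.log 2)⁻¹ • Real.log) = Real.logb 2 := by
    funext x
    simp [Real.logb, div_eq_inv_mul]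
  rw [← heq]
  exact h

lemma aux_pos (a b u v : ℝ) (ha : 0 ≤ a) (hb : 0 ≤ b) (hab : a + b = 1)
    (hu : 0 < u) (hv : 0 < v) : 0 < a * u + b * v := by
  rcases lt_or_eq_of_le ha with ha' | ha'
  · exact add_pos_of_pos_of_nonneg (mul_pos ha' hu) (mul_nonneg hb hv.le)
  · have hb' : b = 1 := by linarith
    simpa [← ha', hb'] using hv

/-- For any constants `g > 0` and `N₀ > 0`, the function
`G(p, B) = B · log₂(1 + g·p/(N₀·B))` is concave on the open positive quadrant. -/
theorem concaveOn_rate_function (g N₀ : ℝ) (hg : 0 < g) (hN₀ : 0 < N₀) :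
    ConcaveOn ℝ {x : ℝ × ℝ | 0 < x.1 ∧ 0 < x.2}
      (fun x => x.2 * Real.logb 2 (1 + g * x.1 / (N₀ * x.2))) := by
  constructor
  · intro x hx y hy a b ha hb hab
    exact ⟨aux_pos a b x.1 y.1 ha hb hab hx.1 hy.1,
           aux_pos a b x.2 y.2 ha hb hab hx.2 hy.2⟩
  · intro x hx y hy a b ha hb hab
    obtain ⟨hp1, hB1⟩ := hx
    obtain ⟨hp2, hB2⟩ := hy
    set S : ℝ := a * x.2 + b * y.2 with hS
    have hSpos : 0 < S := aux_pos a b x.2 y.2 ha hb hab hB1 hB2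
    set w1 : ℝ := a * x.2 / S with hw1
    set w2 : ℝ := b * y.2 / S with hw2
    set u : ℝ := 1 + g * x.1 / (N₀ * x.2) with hu
    set v : ℝ := 1 + g * y.1 / (N₀ * y.2) with hv
    have hupos : 0 < u := by
      rw [hu]; positivity
    have hvpos : 0 < v := by
      rw [hv]; positivity
    have hw1nn : 0 ≤ w1 := by positivity
    have hw2nn : 0 ≤ w2 := by positivity
    have hwsum : w1 + w2 = 1 := by
      rw [hw1, hw2, ← add_div, hS, div_self hSpos.ne']
    have hconc := concaveOn_logb_two.2 (Set.mem_Ioi.mpr hupos) (Set.mem_Ioi.mpr hvpos)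
      hw1nn hw2nn hwsum
    simp only [smul_eq_mul] at hconc
    have hkey : w1 * u + w2 * v
        = 1 + g * (a * x.1 + b * y.1) / (N₀ * S) := by
      rw [hw1, hw2, hu, hv]
      field_simp
      ring
    rw [hkey] at hconc
    -- now multiply by S
    have hmul := mul_le_mul_of_nonneg_left hconc hSpos.le
    have h1 : S * w1 = a * x.2 := by
      rw [hw1]; field_simp
    have h2 : S * w2 = b * y.2 := by
      rw [hw2]; field_simp
    calc a • (x.2 * Real.logb 2 u) + b • (y.2 * Real.logb 2 v)
        = S * (w1 * Real.logb 2 u + w2 * Real.logb 2 v) := by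
          rw [mul_add, ← mul_assoc, ← mul_assoc, h1, h2]
          simp [smul_eq_mul]; ring
      _ ≤ S * Real.logb 2 (1 + g * (a * x.1 + b * y.1) / (N₀ * S)) := hmul
      _ = (a • x + b • y).2 * Real.logb 2
            (1 + g * (a • x + b • y).1 / (N₀ * (a • x + b • y).2)) := by
          simp [hS, smul_eq_mul]
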